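/- There is an N such that for every even integer n ≥ N, setting k = ⌊n/2 − (1/2)·√(n·(ln n + ln ln n))⌋, we have Σ_{i=0}^{k} C(n, i) ≤ 2^n / √(n·ln n) (as real numbers), where C(n,i) denotes the binomial coefficient. -/

import Mathlib

open Finset

lemma centralBinom_sq_le (m : ℕ) : Nat.centralBinom m ^ 2 * (2*m+1) ≤ 16 ^ m := by
  induction m with
  | zero => simp [Nat.centralBinom]
  | succ m ih =>
    have h := Nat.succ_mul_centralBinom_succ m
    have hpos : 0 < (m+1)^2 := by positivity
    refine Nat.le_of_mul_le_mul_left ?_ hpos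
    have hsq : (m+1)^2 * Nat.centralBinom (m+1)^2 = 4*(2*m+1)^2 * Nat.centralBinom m ^2 := by
      calc (m+1)^2 * Nat.centralBinom (m+1)^2 = ((m+1) * Nat.centralBinom (m+1))^2 := by ring
        _ = (2*(2*m+1)* Nat.centralBinom m)^2 := by rw [h]
        _ = 4*(2*m+1)^2 * Nat.centralBinom m ^2 := by ring
    calc (m+1)^2 * (Nat.centralBinom (m+1) ^ 2 * (2*(m+1)+1))
        = ((m+1)^2 * Nat.centralBinom (m+1)^2) * (2*m+3) := by ring
      _ = 4*(2*m+1)*(2*m+3) * (Nat.centralBinom m ^2 * (2*m+1)) := by rw [hsq]; ring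
      _ ≤ 4*(2*m+1)*(2*m+3) * 16^m := Nat.mul_le_mul_left _ ih
      _ ≤ (m+1)^2 * 16^(m+1) := by
          have h2 : 4*(2*m+1)*(2*m+3) ≤ (m+1)^2 * 16 := by nlinarith
          calc 4*(2*m+1)*(2*m+3) * 16^m ≤ ((m+1)^2*16) * 16^m := Nat.mul_le_mul_right _ h2
            _ = (m+1)^2 * 16^(m+1) := by ring

lemma central_real_le (m : ℕ) (hm : 1 ≤ m) :
    ((2*m).choose m : ℝ) ≤ 2^(2*m) / Real.sqrt (2*m) := by
  have key := centralBinom_sq_le m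
  have hcast : ((Nat.centralBinom m : ℝ))^2 * (2*m+1) ≤ 16^m := by
    exact_mod_cast key
  have hc : (Nat.centralBinom m : ℝ) = (2*m).choose m := by
    rw [Nat.centralBinom]
  have hsqrtpos : (0:ℝ) < Real.sqrt (2*m) := by
    apply Real.sqrt_pos.2; positivity
  rw [le_div_iff₀ hsqrtpos]
  have hnn : (0:ℝ) ≤ ((2*m).choose m : ℝ) * Real.sqrt (2*m) := by positivity
  have hsq : (((2*m).choose m : ℝ) * Real.sqrt (2*m))^2 ≤ (2^(2*m))^2 := by
    have h1 : (Real.sqrt (2*m))^2 = 2*m := Real.sq_sqrt (by positivity)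
    have h2 : ((2:ℝ)^(2*m))^2 = 16^m := by
      rw [← pow_mul, show 2*m*2 = 4*m by ring, pow_mul]; norm_num
    rw [mul_pow, h1, h2]
    rw [← hc]
    nlinarith [hcast, (Nat.cast_nonneg (Nat.centralBinom m) : (0:ℝ) ≤ _)]
  nlinarith [hsq, hnn, pow_pos (show (0:ℝ)<2 by norm_num) (2*m)]

lemma decay_le (m M : ℕ) : ∀ j : ℕ, j ≤ m → m + j ≤ M →
    (((2*m).choose (m - j) : ℝ)) ≤ ((2*m).choose m : ℝ) * Real.exp (-(j^2) / M) := by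
  intro j
  induction j with
  | zero => simp
  | succ j ih =>
    intro hjm hM
    have hj : j ≤ m := by omega
    have hMj : m + j ≤ M := by omega
    have hM0 : (0:ℝ) < M := by
      have : 0 < M := by omega
      exact_mod_cast this
    have IH := ih hj hMj
    -- identity
    have hid : ((2*m).choose (m - j) : ℝ) * ((m:ℝ) - j) = ((2*m).choose (m - (j+1)) : ℝ) * ((m:ℝ) + j + 1) := by
      have h1 := Nat.choose_succ_right_eq (2*m) (m - (j+1))
      rw [show m - (j+1) + 1 = m - j by omega, show 2*m - (m - (j+1)) = m + j + 1 by omega] at h1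
      have h2 := congrArg (Nat.cast : ℕ → ℝ) h1
      push_cast [Nat.cast_sub hj] at h2
      linarith [h2]
    have hden : (0:ℝ) < (m:ℝ) + j + 1 := by positivity
    have hexpr : ((2*m).choose (m - (j+1)) : ℝ)
        = ((2*m).choose (m - j) : ℝ) * (((m:ℝ) - j) / ((m:ℝ) + j + 1)) := by
      field_simp
      linarith [hid]
    -- ratio bound
    have hratio : ((m:ℝ) - j) / ((m:ℝ) + j + 1) ≤ Real.exp (-(2*j+1) / M) := by
      have hle1 : ((m:ℝ) - j) / ((m:ℝ) + j + 1) ≤ 1 - (2*j+1)/M := by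
        rw [div_le_iff₀ hden]
        have h1 : ((2*(j:ℝ)+1))/M ≤ (2*(j:ℝ)+1)/((m:ℝ)+j+1) := by
          apply div_le_div_of_nonneg_left (by positivity) hden
          exact_mod_cast hM
        have h2 : (1 - (2*(j:ℝ)+1)/((m:ℝ)+j+1)) * ((m:ℝ)+j+1) = (m:ℝ) - j := by
          field_simp
          ring
        nlinarith [h1, hden]
      have hle2 : 1 - (2*(j:ℝ)+1)/M ≤ Real.exp (-(2*j+1)/M) := by
        have := Real.add_one_le_exp (-(2*(j:ℝ)+1)/M)
        rw [neg_div] at this ⊢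
        linarith
      linarith
    have hnn : (0:ℝ) ≤ ((2*m).choose (m-j) : ℝ) := Nat.cast_nonneg _
    have hrnn : (0:ℝ) ≤ ((m:ℝ) - j) / ((m:ℝ) + j + 1) := by
      apply div_nonneg _ (le_of_lt hden)
      have : (j:ℝ) ≤ m := by exact_mod_cast hj
      linarith
    calc ((2*m).choose (m - (j+1)) : ℝ)
        = ((2*m).choose (m - j) : ℝ) * (((m:ℝ) - j) / ((m:ℝ) + j + 1)) := hexpr
      _ ≤ (((2*m).choose m : ℝ) * Real.exp (-(j^2) / M)) * Real.exp (-(2*j+1) / M) := by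
          apply mul_le_mul IH hratio hrnn (by positivity)
      _ = ((2*m).choose m : ℝ) * Real.exp (-((j:ℝ)+1)^2 / M) := by
          rw [mul_assoc, ← Real.exp_add]
          congr 1
          field_simp
          ring
      _ = ((2*m).choose m : ℝ) * Real.exp (-(((j+1):ℕ):ℝ)^2 / M) := by push_cast; ring_nf

lemma ptwise_le (n k : ℕ) (hk : 2*k ≤ n) : ∀ d : ℕ, d ≤ k →
    ((n.choose (k - d) : ℝ)) ≤ (n.choose k : ℝ) * ((k:ℝ)/((n:ℝ) - k + 1))^d := by
  intro d
  induction d with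
  | zero => simp
  | succ d ih =>
    intro hdk
    have hd : d ≤ k := by omega
    have hkn : k ≤ n := by omega
    have IH := ih hd
    have hden : (0:ℝ) < (n:ℝ) - k + 1 := by
      have : (k:ℝ) ≤ n := by exact_mod_cast hkn
      linarith
    have hden2 : (0:ℝ) < (n:ℝ) - k + d + 1 := by
      have : (0:ℝ) ≤ (d:ℝ) := Nat.cast_nonneg d
      linarith
    have hid : (n.choose (k - d) : ℝ) * ((k:ℝ) - d) = (n.choose (k - (d+1)) : ℝ) * ((n:ℝ) - k + d + 1) := by
      have h1 := Nat.choose_succ_right_eq n (k - (d+1))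
      rw [show k - (d+1) + 1 = k - d by omega, show n - (k - (d+1)) = n - k + d + 1 by omega] at h1
      have h2 := congrArg (Nat.cast : ℕ → ℝ) h1
      push_cast [Nat.cast_sub hd, Nat.cast_sub hkn] at h2
      linarith [h2]
    have hexpr : (n.choose (k - (d+1)) : ℝ) = (n.choose (k - d) : ℝ) * (((k:ℝ) - d) / ((n:ℝ) - k + d + 1)) := by
      field_simp
      linarith [hid]
    have hratio : ((k:ℝ) - d) / ((n:ℝ) - k + d + 1) ≤ (k:ℝ)/((n:ℝ) - k + 1) := by
      rw [div_le_div_iff₀ hden2 hden]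
      have hdr : (0:ℝ) ≤ (d:ℝ) := Nat.cast_nonneg d
      have hkr : (0:ℝ) ≤ (k:ℝ) := Nat.cast_nonneg k
      nlinarith
    have hrnn : (0:ℝ) ≤ ((k:ℝ) - d) / ((n:ℝ) - k + d + 1) := by
      apply div_nonneg _ (le_of_lt hden2)
      have : (d:ℝ) ≤ k := by exact_mod_cast hd
      linarith
    calc (n.choose (k - (d+1)) : ℝ)
        = (n.choose (k - d) : ℝ) * (((k:ℝ) - d) / ((n:ℝ) - k + d + 1)) := hexpr
      _ ≤ ((n.choose k : ℝ) * ((k:ℝ)/((n:ℝ) - k + 1))^d) * ((k:ℝ)/((n:ℝ) - k + 1)) := by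
          apply mul_le_mul IH hratio hrnn (by positivity)
      _ = (n.choose k : ℝ) * ((k:ℝ)/((n:ℝ) - k + 1))^(d+1) := by ring

lemma sum_le_geom (n k : ℕ) (hk : 2*k ≤ n) :
    (∑ i ∈ Finset.range (k+1), (n.choose i : ℝ)) ≤
      (n.choose k : ℝ) * (((n:ℝ) - k + 1)/((n:ℝ) - 2*k + 1)) := by
  have hkn : k ≤ n := by omega
  have hkr : (2*(k:ℝ)) ≤ n := by exact_mod_cast hk
  have hden : (0:ℝ) < (n:ℝ) - k + 1 := by
    have : (k:ℝ) ≤ n := by exact_mod_cast hkn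
    linarith
  set r : ℝ := (k:ℝ)/((n:ℝ) - k + 1) with hr
  have hr0 : (0:ℝ) ≤ r := by positivity
  have hr1 : r < 1 := by
    rw [hr, div_lt_one hden]; linarith
  have hden2 : (0:ℝ) < (n:ℝ) - 2*k + 1 := by linarith
  have h1 : (∑ i ∈ Finset.range (k+1), (n.choose i : ℝ))
      = ∑ d ∈ Finset.range (k+1), (n.choose (k+1-1-d) : ℝ) :=
    (Finset.sum_range_reflect _ _).symm
  simp only [Nat.add_sub_cancel] at h1
  have h2 : ∑ d ∈ Finset.range (k+1), (n.choose (k-d) : ℝ)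
      ≤ ∑ d ∈ Finset.range (k+1), (n.choose k : ℝ) * r^d := by
    apply Finset.sum_le_sum
    intro d hd
    exact ptwise_le n k hk d (by simpa using Finset.mem_range.mp hd |> Nat.lt_succ_iff.mp)
  have hgeom : (∑ d ∈ Finset.range (k+1), r^d) ≤ 1/(1-r) := by
    have hmul := geom_sum_mul r (k+1)
    have h1r : (0:ℝ) < 1 - r := by linarith
    rw [le_div_iff₀ h1r]
    have hpow : (0:ℝ) ≤ r^(k+1) := pow_nonneg hr0 _
    nlinarith [hmul]
  have h3 : (∑ d ∈ Finset.range (k+1), (n.choose k : ℝ) * r^d)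
      = (n.choose k : ℝ) * ∑ d ∈ Finset.range (k+1), r^d := by
    rw [Finset.mul_sum]
  have hfin : (1:ℝ)/(1-r) = ((n:ℝ) - k + 1)/((n:ℝ) - 2*k + 1) := by
    have h1r : 1 - r = ((n:ℝ)-2*k+1)/((n:ℝ)-k+1) := by
      rw [hr]
      field_simp
      ring
    rw [h1r, one_div_div]
  calc (∑ i ∈ Finset.range (k+1), (n.choose i : ℝ))
      = ∑ d ∈ Finset.range (k+1), (n.choose (k-d) : ℝ) := h1
    _ ≤ ∑ d ∈ Finset.range (k+1), (n.choose k : ℝ) * r^d := h2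
    _ = (n.choose k : ℝ) * ∑ d ∈ Finset.range (k+1), r^d := h3
    _ ≤ (n.choose k : ℝ) * (1/(1-r)) := by
        apply mul_le_mul_of_nonneg_left hgeom (Nat.cast_nonneg _)
    _ = (n.choose k : ℝ) * (((n:ℝ) - k + 1)/((n:ℝ) - 2*k + 1)) := by rw [hfin]

set_option maxHeartbeats 1000000 in
/-- For all sufficiently large even `n`, setting
`k = ⌊n/2 - (1/2)√(n(ln n + ln ln n))⌋`, we have
`Σ_{i=0}^{k} C(n, i) ≤ 2^n / √(n ln n)`. -/
theorem sum_choose_le_of_even :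
    ∃ N : ℕ, ∀ n : ℕ, N ≤ n → Even n →
      (∑ i ∈ Finset.range
          (⌊(n : ℝ) / 2 -
            Real.sqrt ((n : ℝ) * (Real.log n + Real.log (Real.log n))) / 2⌋₊ + 1),
          (n.choose i : ℝ)) ≤
        2 ^ n / Real.sqrt ((n : ℝ) * Real.log n) := by
  have e1 : ∀ᶠ (x:ℝ) in Filter.atTop, 1 ≤ Real.log (Real.log x) :=
    (Real.tendsto_log_atTop.comp Real.tendsto_log_atTop).eventually_ge_atTop 1
  have e2 : ∀ᶠ (x:ℝ) in Filter.atTop, 3 ≤ Real.log x :=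
    Real.tendsto_log_atTop.eventually_ge_atTop 3
  have e3 : ∀ᶠ (x:ℝ) in Filter.atTop, Real.log x ^ 3 ≤ x / 8 := by
    have h := Real.tendsto_pow_log_div_mul_add_atTop 1 0 3 one_ne_zero
    have h8 : ∀ᶠ (x:ℝ) in Filter.atTop, Real.log x ^ 3 / (1 * x + 0) < 1/8 :=
      h.eventually (gt_mem_nhds (by norm_num))
    filter_upwards [h8, Filter.eventually_gt_atTop (0:ℝ)] with x hx hx0
    rw [one_mul, add_zero] at hx
    rw [div_lt_iff₀ hx0] at hx
    linarith
  have e4 : ∀ᶠ (x:ℝ) in Filter.atTop, 16 ≤ x := Filter.eventually_ge_atTop 16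
  have hall := e1.and (e2.and (e3.and e4))
  have hnat : ∀ᶠ (n:ℕ) in Filter.atTop,
      (1 ≤ Real.log (Real.log (n:ℝ)) ∧ 3 ≤ Real.log (n:ℝ) ∧ Real.log (n:ℝ) ^ 3 ≤ (n:ℝ) / 8 ∧ 16 ≤ (n:ℝ)) :=
    (tendsto_natCast_atTop_atTop (R := ℝ)).eventually hall
  obtain ⟨N, hN⟩ := Filter.eventually_atTop.mp hnat
  refine ⟨N, fun n hn hev => ?_⟩
  obtain ⟨hLL1, hL3, hL8, hx16⟩ := hN n hn
  set x : ℝ := (n:ℝ) with hxdef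
  set L : ℝ := Real.log x with hLdef
  set LL : ℝ := Real.log L with hLLdef
  have hx0 : (0:ℝ) < x := by linarith
  have hL1 : (1:ℝ) ≤ L := by linarith
  have hLL0 : (0:ℝ) ≤ LL := by linarith
  have hLLleL : LL ≤ L := by
    have := Real.log_le_sub_one_of_pos (show (0:ℝ) < L by linarith)
    linarith
  have hLx8 : L ≤ x/8 := by
    have hL2 : 1 ≤ L^2 := by nlinarith [hL1]
    have hLc : L ≤ L^3 := by nlinarith [hL2, hL1]
    linarith
  obtain ⟨m, hm⟩ := hev
  have hn2 : n = 2*m := by omega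
  have hm1 : 1 ≤ m := by
    have h16 : (16:ℝ) ≤ (n:ℝ) := hx16
    have : 16 ≤ n := by exact_mod_cast h16
    omega
  have hmx : (m:ℝ) = x/2 := by
    rw [hxdef, hn2]; push_cast; ring
  set s : ℝ := Real.sqrt (x*(L+LL))/2 with hsdef
  have harg0 : (0:ℝ) ≤ x*(L+LL) := mul_nonneg hx0.le (by linarith)
  have hs0 : (0:ℝ) ≤ s := by rw [hsdef]; positivity
  have hsq2 : Real.sqrt ((x/2)^2) = x/2 := Real.sqrt_sq (by linarith)
  have hsx4 : s ≤ x/4 := by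
    have h1 : x*(L+LL) ≤ (x/2)^2 := by nlinarith [hLx8, hLLleL, hx0]
    have h2 : Real.sqrt (x*(L+LL)) ≤ x/2 := by
      rw [← hsq2]; exact Real.sqrt_le_sqrt h1
    rw [hsdef]; linarith
  have hs1 : 1 ≤ s := by
    have h1 : (16:ℝ) ≤ x*(L+LL) := by nlinarith [hx16, hL1, hLL0]
    have h2 : Real.sqrt 16 ≤ Real.sqrt (x*(L+LL)) := Real.sqrt_le_sqrt h1
    have h3 : Real.sqrt 16 = 4 := by
      rw [show (16:ℝ) = 4^2 by norm_num, Real.sqrt_sq (by norm_num)]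
    rw [hsdef]; linarith
  set K : ℕ := ⌊x/2 - s⌋₊ with hKdef
  have hfl0 : (0:ℝ) ≤ x/2 - s := by linarith
  have hKle : (K:ℝ) ≤ x/2 - s := Nat.floor_le hfl0
  have hKgt : x/2 - s < (K:ℝ) + 1 := Nat.lt_floor_add_one _
  have hK1 : 1 ≤ K := Nat.le_floor (by push_cast; linarith)
  have hKltm : K < m := by
    have h1 : (K:ℝ) < (m:ℝ) := by rw [hmx]; linarith
    exact_mod_cast h1
  set j : ℕ := m - K with hjdef
  have hjm : j ≤ m := Nat.sub_le _ _
  have hmjK : m - j = K := by omega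
  have hjr : (j:ℝ) = (m:ℝ) - K := by
    rw [hjdef, Nat.cast_sub hKltm.le]
  have hjlow : s ≤ (j:ℝ) := by rw [hjr, hmx]; linarith
  have hjup : (j:ℝ) ≤ s + 1 := by rw [hjr, hmx]; linarith
  have h2K : 2*K ≤ n := by omega
  have hsum := sum_le_geom n K h2K
  have hdecay := decay_le m (m+j) j hjm (le_refl _)
  rw [hmjK, ← hn2] at hdecay
  push_cast at hdecay
  have hcentral := central_real_le m hm1
  rw [← hn2] at hcentral
  have h2mx : (2:ℝ)*(m:ℝ) = x := by rw [hmx]; ring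
  rw [h2mx] at hcentral
  -- exponent bound
  have hmj0 : (0:ℝ) < (m:ℝ) + (j:ℝ) := by
    have : (1:ℝ) ≤ (m:ℝ) := by exact_mod_cast hm1
    have : (0:ℝ) ≤ (j:ℝ) := Nat.cast_nonneg j
    linarith
  have hE : L/2 ≤ (j:ℝ)^2 / ((m:ℝ)+(j:ℝ)) := by
    rw [le_div_iff₀ hmj0]
    have hj2 : s^2 ≤ (j:ℝ)^2 := pow_le_pow_left₀ hs0 hjlow 2
    have hs2 : s^2 = x*(L+LL)/4 := by
      rw [hsdef, div_pow, Real.sq_sqrt harg0]; norm_num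
    have hL0 : (0:ℝ) ≤ L := by linarith
    have h2Ls : 2*L*s ≤ x/2 := by
      have e : L * Real.sqrt (x*(L+LL)) = Real.sqrt (L^2*(x*(L+LL))) := by
        rw [Real.sqrt_mul (sq_nonneg L), Real.sqrt_sq hL0]
      have hle : L^2*(x*(L+LL)) ≤ (x/2)^2 := by nlinarith [hLx8, hLLleL, hx0, hL1]
      have h4 : Real.sqrt (L^2*(x*(L+LL))) ≤ x/2 := by
        rw [← hsq2]; exact Real.sqrt_le_sqrt hle
      have h5 : 2*L*s = L * Real.sqrt (x*(L+LL)) := by rw [hsdef]; ring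
      rw [h5, e]; exact h4
    have h2L : 2*L ≤ x/4 := by linarith
    have hxLL : x ≤ x*LL := by nlinarith [hLL1, hx0]
    have hkey : 2*L*(s+1) ≤ x*LL := by nlinarith [h2Ls, h2L, hxLL]
    have hmjub : (m:ℝ) + (j:ℝ) ≤ x/2 + s + 1 := by rw [hmx]; linarith
    nlinarith [hj2, hs2, hkey, mul_le_mul_of_nonneg_left hmjub (show (0:ℝ) ≤ L/2 by linarith)]
  have hexpmono : Real.exp (-(j:ℝ)^2 / ((m:ℝ)+(j:ℝ))) ≤ Real.exp (-(L/2)) := by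
    apply Real.exp_le_exp.2
    rw [neg_div]
    linarith
  have hsqrtx : Real.sqrt x = Real.exp (L/2) := by
    rw [hLdef, ← Real.log_sqrt hx0.le, Real.exp_log (Real.sqrt_pos.2 hx0)]
  have hexpL : Real.exp (-(L/2)) = (Real.sqrt x)⁻¹ := by
    rw [Real.exp_neg, hsqrtx]
  -- geometric factor bound
  have hKr1 : (1:ℝ) ≤ (K:ℝ) := by exact_mod_cast hK1
  have hden2s : 2*s ≤ x - 2*(K:ℝ) + 1 := by linarith
  have h2spos : (0:ℝ) < 2*s := by linarith
  have hA : (x - (K:ℝ) + 1)/(x - 2*(K:ℝ) + 1) ≤ x/(2*s) :=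
    div_le_div₀ hx0.le (by linarith) h2spos hden2s
  have hApos : (0:ℝ) ≤ (x - (K:ℝ) + 1)/(x - 2*(K:ℝ) + 1) :=
    div_nonneg (by linarith) (by linarith)
  have hB0 : (0:ℝ) ≤ (2:ℝ)^n / Real.sqrt x := by positivity
  have hchoosem0 : (0:ℝ) ≤ (n.choose m : ℝ) := Nat.cast_nonneg _
  have hsx : Real.sqrt x * Real.sqrt x = x := Real.mul_self_sqrt hx0.le
  have hsxpos : (0:ℝ) < Real.sqrt x := Real.sqrt_pos.2 hx0
  have hfinal : ((2:ℝ)^n / Real.sqrt x * (Real.sqrt x)⁻¹) * (x/(2*s)) = 2^n/(2*s) := by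
    field_simp
    rw [Real.sq_sqrt hx0.le]
  have hlast : (2:ℝ)^n/(2*s) ≤ 2^n / Real.sqrt (x*L) := by
    have hxL0 : (0:ℝ) < x*L := mul_pos hx0 (by linarith)
    have h1 : Real.sqrt (x*L) ≤ 2*s := by
      have : x*L ≤ x*(L+LL) := mul_le_mul_of_nonneg_left (by linarith) hx0.le
      have h2 := Real.sqrt_le_sqrt this
      rw [hsdef]; linarith
    exact div_le_div_of_nonneg_left (by positivity) (Real.sqrt_pos.2 hxL0) h1
  calc (∑ i ∈ Finset.range (K + 1), (n.choose i : ℝ))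
      ≤ (n.choose K : ℝ) * ((x - (K:ℝ) + 1)/(x - 2*(K:ℝ) + 1)) := hsum
    _ ≤ ((n.choose m : ℝ) * Real.exp (-(j:ℝ)^2 / ((m:ℝ)+(j:ℝ)))) *
          ((x - (K:ℝ) + 1)/(x - 2*(K:ℝ) + 1)) := by
        apply mul_le_mul_of_nonneg_right hdecay hApos
    _ ≤ (((2:ℝ)^n / Real.sqrt x) * Real.exp (-(L/2))) * (x/(2*s)) := by
        apply mul_le_mul _ hA hApos (by positivity)
        exact mul_le_mul hcentral hexpmono (Real.exp_pos _).le hB0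
    _ = 2^n/(2*s) := by rw [hexpL]; exact hfinal
    _ ≤ 2^n / Real.sqrt (x*L) := hlast
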